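/- Let X be a finite set, φ¹, φ² : X → [0,1], and K a nonnegative integer. Define f(B) = max{ ∑_{x∈S} φ²(x) : S ⊆ B, |S| ≤ K } for B ⊆ X, F = max{ ∑_{x∈X} φ²(x)·y(x) : y : X → ℝ, 0 ≤ y(x) ≤ φ¹(x) for all x, ∑_{x∈X} y(x) ≤ K }, and G = max{ ∑_{B⊆X} f(B)·λ(B) : λ : 2^X → ℝ≥0, ∑_{B⊆X} λ(B) = 1, ∑_{B⊆X, x∈B} λ(B) = φ¹(x) for every x∈X }. Then F ≤ G. -/

import Mathlib

open scoped Classical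
noncomputable section

/-- `max { ∑_{x ∈ S} φ x : S ⊆ s, |S| ≤ K }`. -/
def bestSum {α : Type*} (s : Finset α) (K : ℕ) (φ : α → ℝ) : ℝ :=
  (s.powerset.filter fun S => S.card ≤ K).sup' ⟨∅, by simp⟩ fun S => ∑ x ∈ S, φ x

section aux
variable {X : Type*} [Fintype X]

lemma bestSum_nonneg (B : Finset X) (K : ℕ) (φ : X → ℝ) (hφ : ∀ x, 0 ≤ φ x) :
    0 ≤ bestSum B K φ := by
  have h : (∅ : Finset X) ∈ B.powerset.filter fun S => S.card ≤ K := by simp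
  have := Finset.le_sup' (fun S => ∑ x ∈ S, φ x) h
  simpa [bestSum] using this

lemma sum_le_bestSum (B : Finset X) (K : ℕ) (φ : X → ℝ) (h : B.card ≤ K) :
    ∑ x ∈ B, φ x ≤ bestSum B K φ := by
  have hB : B ∈ B.powerset.filter fun S => S.card ≤ K := by simp [h]
  exact Finset.le_sup' (fun S => ∑ x ∈ S, φ x) hB

lemma bestSum_mono {B B' : Finset X} (K : ℕ) (φ : X → ℝ) (h : B ⊆ B') :
    bestSum B K φ ≤ bestSum B' K φ := by
  apply Finset.sup'_le
  intro S hS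
  simp only [Finset.mem_filter, Finset.mem_powerset] at hS
  have hS' : S ∈ B'.powerset.filter fun S => S.card ≤ K := by
    simp [hS.2, hS.1.trans h]
  exact Finset.le_sup' (fun S => ∑ x ∈ S, φ x) hS' 

lemma bestSum_le_card (B : Finset X) (K : ℕ) (φ : X → ℝ) (hφ : ∀ x, φ x ≤ 1) :
    bestSum B K φ ≤ (Fintype.card X : ℝ) := by
  apply Finset.sup'_le
  intro S hS
  calc ∑ x ∈ S, φ x ≤ ∑ _x ∈ S, (1:ℝ) := Finset.sum_le_sum fun x _ => hφ x
    _ = S.card := by simp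
    _ ≤ (Fintype.card X : ℝ) := by exact_mod_cast Finset.card_le_univ S

def IsDistOn (μ : Finset X → ℝ) (y : X → ℝ) : Prop :=
  (∀ B, 0 ≤ μ B) ∧ (∑ B : Finset X, μ B) = 1 ∧
  (∀ x, (∑ B ∈ Finset.univ.filter (fun B : Finset X => x ∈ B), μ B) = y x)

lemma sum_indicator (A : Finset X) : ∑ x, (if x ∈ A then (1:ℝ) else 0) = A.card := by
  simp [Finset.sum_ite_mem]

lemma delta_marginal (S : Finset X) (x : X) :
    ∑ B ∈ Finset.univ.filter (fun B : Finset X => x ∈ B), (if B = S then (1:ℝ) else 0)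
      = if x ∈ S then 1 else 0 := by
  rw [Finset.sum_filter]
  have h : ∀ B : Finset X, (if x ∈ B then (if B = S then (1:ℝ) else 0) else 0)
      = if B = S then (if x ∈ S then 1 else 0) else 0 := by
    intro B
    by_cases hB : B = S
    · subst hB; by_cases hx : x ∈ B <;> simp [hx]
    · simp [hB]
  rw [Finset.sum_congr rfl fun B _ => h B, Finset.sum_ite_eq']
  simp

lemma delta_isDist (S : Finset X) :
    IsDistOn (fun B => if B = S then (1:ℝ) else 0) (fun x => if x ∈ S then 1 else 0) := by
  refine ⟨fun B => by dsimp only; split_ifs <;> norm_num, ?_, fun x => delta_marginal S x⟩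
  rw [Finset.sum_ite_eq']; simp

lemma IsDistOn.combo {μ1 μ2 : Finset X → ℝ} {y1 y2 : X → ℝ} (c : ℝ)
    (h1 : IsDistOn μ1 y1) (h2 : IsDistOn μ2 y2) (hc0 : 0 ≤ c) (hc1 : c ≤ 1) :
    IsDistOn (fun B => c * μ1 B + (1 - c) * μ2 B)
      (fun x => c * y1 x + (1 - c) * y2 x) := by
  refine ⟨fun B => add_nonneg (mul_nonneg hc0 (h1.1 B)) (mul_nonneg (by linarith) (h2.1 B)), ?_, ?_⟩
  · rw [Finset.sum_add_distrib, ← Finset.mul_sum, ← Finset.mul_sum, h1.2.1, h2.2.1]; ring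
  · intro x
    rw [Finset.sum_add_distrib, ← Finset.mul_sum, ← Finset.mul_sum, h1.2.2 x, h2.2.2 x]

lemma sum_two_shift (x0 x1 : X) (hne : x0 ≠ x1) (t : ℝ) (y : X → ℝ) :
    ∑ x, (if x = x0 then y x0 + t else if x = x1 then y x1 - t else y x) = ∑ x, y x := by
  have h : ∀ x : X, (if x = x0 then y x0 + t else if x = x1 then y x1 - t else y x)
      = y x + ((if x = x0 then t else 0) + (if x = x1 then -t else 0)) := by
    intro x
    by_cases h0 : x = x0
    · subst h0; simp [hne]
    · by_cases h1 : x = x1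
      · subst h1; simp [h0]; ring
      · simp [h0, h1]
  rw [Finset.sum_congr rfl fun x _ => h x]
  rw [Finset.sum_add_distrib, Finset.sum_add_distrib, Finset.sum_ite_eq', Finset.sum_ite_eq']
  simp


lemma exists_decomp (K : ℕ) :
    ∀ n : ℕ, ∀ y : X → ℝ, (∀ x, 0 ≤ y x ∧ y x ≤ 1) → (∑ x, y x) ≤ (K : ℝ) →
    (Finset.univ.filter fun x => y x ≠ 0 ∧ y x ≠ 1).card ≤ n →
    ∃ μ : Finset X → ℝ, IsDistOn μ y ∧ ∀ B, μ B ≠ 0 → B.card ≤ K := by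
  intro n
  induction n with
  | zero =>
    intro y hy hsum hcard
    have hempty : (Finset.univ.filter fun x => y x ≠ 0 ∧ y x ≠ 1) = ∅ :=
      Finset.card_eq_zero.mp (Nat.le_zero.mp hcard)
    have hint : ∀ x, y x = 0 ∨ y x = 1 := by
      intro x
      by_contra h
      push_neg at h
      have hmem : x ∈ (Finset.univ.filter fun x => y x ≠ 0 ∧ y x ≠ 1) := by
        simp [h.1, h.2]
      rw [hempty] at hmem
      exact absurd hmem (Finset.notMem_empty x)
    set S := Finset.univ.filter (fun x => y x = 1) with hSdef
    have hy_eq : y = fun x => if x ∈ S then 1 else 0 := by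
      funext x
      rcases hint x with h | h
      · have hx : x ∉ S := by
          simp only [hSdef, Finset.mem_filter, Finset.mem_univ, true_and]
          rw [h]; norm_num
        simp [hx, h]
      · have hx : x ∈ S := by simp [hSdef, h]
        simp [hx, h]
    have hsum' : ∑ x, y x = (S.card : ℝ) := by
      rw [hy_eq]; exact sum_indicator S
    have hScard : S.card ≤ K := by
      rw [hsum'] at hsum; exact_mod_cast hsum
    refine ⟨fun B => if B = S then 1 else 0, hy_eq ▸ delta_isDist S, ?_⟩
    intro B hB
    by_cases h : B = S
    · subst h; exact hScard
    · simp [h] at hB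
  | succ n ih =>
    intro y hy hsum hcard
    set Fr := Finset.univ.filter (fun x => y x ≠ 0 ∧ y x ≠ 1) with hFrdef
    by_cases hsmall : Fr.card ≤ n
    · exact ih y hy hsum hsmall
    have hFrne : Fr.Nonempty := by
      rw [← Finset.card_pos]; omega
    obtain ⟨x0, hx0⟩ := hFrne
    have hx0' : y x0 ≠ 0 ∧ y x0 ≠ 1 := by
      have := hx0; rw [hFrdef] at this
      simpa using this
    have hx0lt : 0 < y x0 ∧ y x0 < 1 :=
      ⟨lt_of_le_of_ne (hy x0).1 (Ne.symm hx0'.1), lt_of_le_of_ne (hy x0).2 hx0'.2⟩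
    by_cases herase : (Fr.erase x0).Nonempty
    · -- two fractional coordinates
      obtain ⟨x1, hx1e⟩ := herase
      have hne : x1 ≠ x0 := Finset.ne_of_mem_erase hx1e
      have hx1 : x1 ∈ Fr := Finset.mem_of_mem_erase hx1e
      have hx1' : y x1 ≠ 0 ∧ y x1 ≠ 1 := by
        have := hx1; rw [hFrdef] at this
        simpa using this
      have hx1lt : 0 < y x1 ∧ y x1 < 1 :=
        ⟨lt_of_le_of_ne (hy x1).1 (Ne.symm hx1'.1), lt_of_le_of_ne (hy x1).2 hx1'.2⟩
      set t1 := min (1 - y x0) (y x1) with ht1def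
      set t2 := min (y x0) (1 - y x1) with ht2def
      have ht1 : 0 < t1 := lt_min (by linarith [hx0lt.2]) hx1lt.1
      have ht2 : 0 < t2 := lt_min hx0lt.1 (by linarith [hx1lt.2])
      have ht1a : t1 ≤ 1 - y x0 := min_le_left _ _
      have ht1b : t1 ≤ y x1 := min_le_right _ _
      have ht2a : t2 ≤ y x0 := min_le_left _ _
      have ht2b : t2 ≤ 1 - y x1 := min_le_right _ _
      set yp : X → ℝ := fun x => if x = x0 then y x0 + t1 else if x = x1 then y x1 - t1 else y x
        with hypdef
      set ym : X → ℝ := fun x => if x = x1 then y x1 + t2 else if x = x0 then y x0 - t2 else y x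
        with hymdef
      have hyp0 : yp x0 = y x0 + t1 := by simp [hypdef]
      have hyp1 : yp x1 = y x1 - t1 := by simp [hypdef, hne]
      have hym0 : ym x0 = y x0 - t2 := by simp [hymdef, Ne.symm hne]
      have hym1 : ym x1 = y x1 + t2 := by simp [hymdef]
      have hypb : ∀ x, 0 ≤ yp x ∧ yp x ≤ 1 := by
        intro x
        by_cases h0 : x = x0
        · rw [h0, hyp0]
          constructor
          · linarith [(hy x0).1]
          · linarith
        · by_cases h1 : x = x1
          · rw [h1, hyp1]
            constructor
            · linarith
            · linarith [(hy x1).2]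
          · simp only [hypdef, if_neg h0, if_neg h1]; exact hy x
      have hymb : ∀ x, 0 ≤ ym x ∧ ym x ≤ 1 := by
        intro x
        by_cases h1 : x = x1
        · rw [h1, hym1]
          constructor
          · linarith [(hy x1).1]
          · linarith
        · by_cases h0 : x = x0
          · rw [h0, hym0]
            constructor
            · linarith
            · linarith [(hy x0).2]
          · simp only [hymdef, if_neg h0, if_neg h1]; exact hy x
      have hypsum : (∑ x, yp x) ≤ (K : ℝ) := by
        rw [hypdef, sum_two_shift x0 x1 (Ne.symm hne) t1 y]; exact hsum
      have hymsum : (∑ x, ym x) ≤ (K : ℝ) := by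
        rw [hymdef, sum_two_shift x1 x0 hne t2 y]; exact hsum
      have hsub : ∀ (z : X → ℝ) (w : X), w ∈ Fr → (z w = 0 ∨ z w = 1) →
          (∀ x, x ≠ x0 → x ≠ x1 → z x = y x) →
          (∀ x, x = x0 ∨ x = x1 → x ≠ w → x ∈ Fr) →
          (Finset.univ.filter fun x => z x ≠ 0 ∧ z x ≠ 1).card ≤ n := by
        intro z w hwFr hwint hother hkeep
        have hsubset : (Finset.univ.filter fun x => z x ≠ 0 ∧ z x ≠ 1) ⊆ Fr.erase w := by
          intro x hx
          simp only [Finset.mem_filter, Finset.mem_univ, true_and] at hx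
          have hxw : x ≠ w := by
            rintro rfl
            rcases hwint with h | h
            · exact hx.1 h
            · exact hx.2 h
          rw [Finset.mem_erase]
          refine ⟨hxw, ?_⟩
          by_cases h0 : x = x0
          · exact hkeep x (Or.inl h0) hxw
          · by_cases h1 : x = x1
            · exact hkeep x (Or.inr h1) hxw
            · rw [hFrdef]
              simp only [Finset.mem_filter, Finset.mem_univ, true_and]
              rw [← hother x h0 h1]
              exact hx
        calc (Finset.univ.filter fun x => z x ≠ 0 ∧ z x ≠ 1).card
            ≤ (Fr.erase w).card := Finset.card_le_card hsubset
          _ = Fr.card - 1 := Finset.card_erase_of_mem hwFr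
          _ ≤ n := by omega
      have hypcard : (Finset.univ.filter fun x => yp x ≠ 0 ∧ yp x ≠ 1).card ≤ n := by
        rcases min_cases (1 - y x0) (y x1) with ⟨heq, _⟩ | ⟨heq, _⟩
        · refine hsub yp x0 hx0 (Or.inr ?_) ?_ ?_
          · rw [hyp0, ht1def, heq]; ring
          · intro x h0 h1; simp only [hypdef, if_neg h0, if_neg h1]
          · rintro x (rfl | rfl) hxw
            · exact absurd rfl hxw
            · exact hx1
        · refine hsub yp x1 hx1 (Or.inl ?_) ?_ ?_
          · rw [hyp1, ht1def, heq]; ring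
          · intro x h0 h1; simp only [hypdef, if_neg h0, if_neg h1]
          · rintro x (rfl | rfl) hxw
            · exact hx0
            · exact absurd rfl hxw
      have hymcard : (Finset.univ.filter fun x => ym x ≠ 0 ∧ ym x ≠ 1).card ≤ n := by
        rcases min_cases (y x0) (1 - y x1) with ⟨heq, _⟩ | ⟨heq, _⟩
        · refine hsub ym x0 hx0 (Or.inl ?_) ?_ ?_
          · rw [hym0, ht2def, heq]; ring
          · intro x h0 h1; simp only [hymdef, if_neg h0, if_neg h1]
          · rintro x (rfl | rfl) hxw
            · exact absurd rfl hxw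
            · exact hx1
        · refine hsub ym x1 hx1 (Or.inr ?_) ?_ ?_
          · rw [hym1, ht2def, heq]; ring
          · intro x h0 h1; simp only [hymdef, if_neg h0, if_neg h1]
          · rintro x (rfl | rfl) hxw
            · exact hx0
            · exact absurd rfl hxw
      obtain ⟨μp, hμp, hμpsupp⟩ := ih yp hypb hypsum hypcard
      obtain ⟨μm, hμm, hμmsupp⟩ := ih ym hymb hymsum hymcard
      set c := t2 / (t1 + t2) with hcdef
      have htsum : 0 < t1 + t2 := by linarith
      have hc0 : 0 ≤ c := div_nonneg ht2.le htsum.le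
      have hc1 : c ≤ 1 := by
        rw [hcdef, div_le_one htsum]; linarith
      have hcmul : c * (t1 + t2) = t2 := div_mul_cancel₀ t2 htsum.ne'
      have hy_comb : y = fun x => c * yp x + (1 - c) * ym x := by
        funext x
        by_cases h0 : x = x0
        · rw [h0, hyp0, hym0]
          linear_combination -hcmul
        · by_cases h1 : x = x1
          · rw [h1, hyp1, hym1]
            linear_combination hcmul
          · simp only [hypdef, hymdef, if_neg h0, if_neg h1]; ring
      refine ⟨fun B => c * μp B + (1 - c) * μm B, hy_comb ▸ hμp.combo c hμm hc0 hc1, ?_⟩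
      intro B hB
      by_cases hp : μp B = 0
      · by_cases hm : μm B = 0
        · exfalso; apply hB; dsimp only; rw [hp, hm]; ring
        · exact hμmsupp B hm
      · exact hμpsupp B hp
    · -- exactly one fractional coordinate x0
      have hone : ∀ x, x ≠ x0 → y x = 0 ∨ y x = 1 := by
        intro x hx
        by_contra h
        push_neg at h
        have hmem : x ∈ Fr.erase x0 := by
          rw [Finset.mem_erase, hFrdef]
          simp [hx, h.1, h.2]
        exact herase ⟨x, hmem⟩
      set t := y x0 with htdef
      set S := Finset.univ.filter (fun x => x ≠ x0 ∧ y x = 1) with hSdef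
      have hx0S : x0 ∉ S := by simp [hSdef]
      have hy_eq : y = fun x =>
          t * (if x ∈ insert x0 S then 1 else 0) + (1 - t) * (if x ∈ S then 1 else 0) := by
        funext x
        by_cases h0 : x = x0
        · rw [h0]
          simp [hx0S, htdef]
        · rcases hone x h0 with h | h
          · have hxS : x ∉ S := by
              simp only [hSdef, Finset.mem_filter, Finset.mem_univ, true_and]
              rintro ⟨-, h1⟩; rw [h] at h1; norm_num at h1
            have hxI : x ∉ insert x0 S := by
              rw [Finset.mem_insert]; rintro (rfl | hc)
              · exact h0 rfl
              · exact hxS hc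
            simp [hxS, hxI, h]
          · have hxS : x ∈ S := by simp [hSdef, h0, h]
            have hxI : x ∈ insert x0 S := Finset.mem_insert_of_mem hxS
            simp [hxS, hxI, h]
      have hsum' : ∑ x, y x = t * ((insert x0 S).card : ℝ) + (1 - t) * (S.card : ℝ) := by
        rw [hy_eq, Finset.sum_add_distrib, ← Finset.mul_sum, ← Finset.mul_sum,
          sum_indicator, sum_indicator]
      have hinscard : (insert x0 S).card = S.card + 1 := Finset.card_insert_of_notMem hx0S
      have hSlt : (S.card : ℝ) < (K : ℝ) := by
        rw [hsum', hinscard] at hsum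
        push_cast at hsum
        nlinarith [hx0lt.1, hx0lt.2]
      have hSK : S.card < K := by exact_mod_cast hSlt
      have hd1 := delta_isDist (X := X) (insert x0 S)
      have hd2 := delta_isDist (X := X) S
      have hcombo := hd1.combo t hd2 hx0lt.1.le hx0lt.2.le
      refine ⟨_, hy_eq ▸ hcombo, ?_⟩
      intro B hB
      by_cases h1 : B = insert x0 S
      · subst h1; rw [hinscard]; omega
      · by_cases h2 : B = S
        · subst h2; omega
        · exfalso; apply hB; simp [h1, h2]

lemma sum_ind_delta (x : X) (C : Finset X) :
    ∑ B : Finset X, (if x ∈ B then (if B = C then (1:ℝ) else 0) else 0)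
      = if x ∈ C then 1 else 0 := by
  have h : ∀ B : Finset X, (if x ∈ B then (if B = C then (1:ℝ) else 0) else 0)
      = if B = C then (if x ∈ C then 1 else 0) else 0 := by
    intro B
    by_cases hB : B = C
    · subst hB; by_cases hx : x ∈ B <;> simp [hx]
    · simp [hB]
  rw [Finset.sum_congr rfl fun B _ => h B, Finset.sum_ite_eq']
  simp

lemma sum_delta_mul (f : Finset X → ℝ) (C : Finset X) :
    ∑ B : Finset X, f B * (if B = C then (1:ℝ) else 0) = f C := by
  have h : ∀ B : Finset X, f B * (if B = C then (1:ℝ) else 0)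
      = if B = C then f B else 0 := by
    intro B; split_ifs <;> simp
  rw [Finset.sum_congr rfl fun B _ => h B, Finset.sum_ite_eq']
  simp

lemma lift_one (K : ℕ) (φ2 : X → ℝ) (x0 : X) (m : X → ℝ) (μ : Finset X → ℝ)
    (hd : IsDistOn μ m) (q : ℝ) (hpq : m x0 ≤ q) (hq : q ≤ 1) :
    ∃ lam : Finset X → ℝ, IsDistOn lam (Function.update m x0 q) ∧
      ∑ B : Finset X, bestSum B K φ2 * μ B ≤ ∑ B : Finset X, bestSum B K φ2 * lam B := by
  have hmarg : ∀ x, ∑ B : Finset X, (if x ∈ B then μ B else 0) = m x := by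
    intro x
    rw [← Finset.sum_filter]
    exact hd.2.2 x
  have hp1 : m x0 ≤ 1 := by
    calc m x0 = ∑ B ∈ Finset.univ.filter (fun B : Finset X => x0 ∈ B), μ B := (hd.2.2 x0).symm
      _ ≤ ∑ B : Finset X, μ B :=
          Finset.sum_le_sum_of_subset_of_nonneg (Finset.filter_subset _ _)
            (fun B _ _ => hd.1 B)
      _ = 1 := hd.2.1
  rcases eq_or_lt_of_le hp1 with hp | hp
  · have hq1 : q = m x0 := le_antisymm (hp ▸ hq) hpq
    refine ⟨μ, ?_, le_refl _⟩
    rw [hq1, Function.update_eq_self]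
    exact hd
  · set p := m x0 with hpdef
    set r := (q - p) / (1 - p) with hrdef
    set s := (1 - q) / (1 - p) with hsdef
    have h1p : 0 < 1 - p := by linarith
    have hr0 : 0 ≤ r := div_nonneg (by linarith) h1p.le
    have hs0 : 0 ≤ s := div_nonneg (by linarith) h1p.le
    have hrs : r + s = 1 := by
      rw [hrdef, hsdef, ← add_div, div_eq_one_iff_eq h1p.ne']
      ring
    have hr1p : r * (1 - p) = q - p := div_mul_cancel₀ _ h1p.ne'
    set k : Finset X → Finset X → ℝ := fun A B =>
      if x0 ∈ A then (if B = A then 1 else 0)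
      else r * (if B = insert x0 A then 1 else 0) + s * (if B = A then 1 else 0) with hkdef
    have hknn : ∀ A B, 0 ≤ k A B := by
      intro A B
      rw [hkdef]
      dsimp only
      split_ifs <;> positivity
    have hktot : ∀ A : Finset X, ∑ B : Finset X, k A B = 1 := by
      intro A
      by_cases hA : x0 ∈ A
      · simp only [hkdef, if_pos hA]
        rw [Finset.sum_ite_eq']
        simp
      · simp only [hkdef, if_neg hA]
        rw [Finset.sum_add_distrib, ← Finset.mul_sum, ← Finset.mul_sum,
          Finset.sum_ite_eq', Finset.sum_ite_eq']
        simp [hrs]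
    refine ⟨fun B => ∑ A : Finset X, μ A * k A B, ⟨?_, ?_, ?_⟩, ?_⟩
    · intro B
      exact Finset.sum_nonneg fun A _ => mul_nonneg (hd.1 A) (hknn A B)
    · rw [Finset.sum_comm]
      have h1 : ∀ A : Finset X, ∑ B : Finset X, μ A * k A B = μ A := by
        intro A
        rw [← Finset.mul_sum, hktot A, mul_one]
      rw [Finset.sum_congr rfl fun A _ => h1 A]
      exact hd.2.1
    · intro x
      rw [Finset.sum_filter]
      have h1 : ∀ B : Finset X, (if x ∈ B then ∑ A : Finset X, μ A * k A B else 0)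
          = ∑ A : Finset X, μ A * (if x ∈ B then k A B else 0) := by
        intro B
        split_ifs <;> simp
      rw [Finset.sum_congr rfl fun B _ => h1 B, Finset.sum_comm]
      have hT : ∀ A : Finset X, ∑ B : Finset X, (if x ∈ B then k A B else 0)
          = if x0 ∈ A then (if x ∈ A then 1 else 0)
            else r * (if x ∈ insert x0 A then 1 else 0) + s * (if x ∈ A then 1 else 0) := by
        intro A
        by_cases hA : x0 ∈ A
        · simp only [hkdef, if_pos hA]
          exact sum_ind_delta x A
        · simp only [hkdef, if_neg hA]
          have h2 : ∀ B : Finset X,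
              (if x ∈ B then r * (if B = insert x0 A then (1:ℝ) else 0)
                + s * (if B = A then 1 else 0) else 0)
              = r * (if x ∈ B then (if B = insert x0 A then (1:ℝ) else 0) else 0)
                + s * (if x ∈ B then (if B = A then (1:ℝ) else 0) else 0) := by
            intro B; split_ifs <;> simp
          rw [Finset.sum_congr rfl fun B _ => h2 B, Finset.sum_add_distrib,
            ← Finset.mul_sum, ← Finset.mul_sum, sum_ind_delta, sum_ind_delta]
      have h3 : ∀ A : Finset X, μ A * (∑ B : Finset X, (if x ∈ B then k A B else 0))
          = μ A * (if x0 ∈ A then (if x ∈ A then 1 else 0)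
            else r * (if x ∈ insert x0 A then 1 else 0) + s * (if x ∈ A then 1 else 0)) := by
        intro A; rw [hT A]
      rw [Finset.sum_congr rfl fun A _ => (by rw [← Finset.mul_sum, hT A] :
        (∑ B : Finset X, μ A * (if x ∈ B then k A B else 0)) = _)]
      by_cases hx : x = x0
      · subst hx
        have h4 : ∀ A : Finset X,
            μ A * (if x ∈ A then (if x ∈ A then (1:ℝ) else 0)
              else r * (if x ∈ insert x A then 1 else 0) + s * (if x ∈ A then 1 else 0))
            = r * μ A + (1 - r) * (if x ∈ A then μ A else 0) := by
          intro A
          by_cases hA : x ∈ A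
          · simp only [if_pos hA, mul_one]; ring
          · simp only [if_neg hA, if_pos (Finset.mem_insert_self x A), mul_one, mul_zero]
            ring
        rw [Finset.sum_congr rfl fun A _ => h4 A, Finset.sum_add_distrib,
          ← Finset.mul_sum, ← Finset.mul_sum, hd.2.1, hmarg x]
        rw [Function.update_self]
        linear_combination hr1p
      · have h4 : ∀ A : Finset X,
            μ A * (if x0 ∈ A then (if x ∈ A then (1:ℝ) else 0)
              else r * (if x ∈ insert x0 A then 1 else 0) + s * (if x ∈ A then 1 else 0))
            = (if x ∈ A then μ A else 0) := by
          intro A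
          have hins : (x ∈ insert x0 A) = (x ∈ A) := by
            simp [Finset.mem_insert, hx]
          by_cases hA : x0 ∈ A
          · simp only [if_pos hA]
            by_cases hxA : x ∈ A <;> simp [hxA]
          · simp only [if_neg hA, hins]
            by_cases hxA : x ∈ A
            · simp only [if_pos hxA, mul_one]
              linear_combination μ A * hrs
            · simp [hxA]
        rw [Finset.sum_congr rfl fun A _ => h4 A, hmarg x, Function.update_of_ne hx]
    · -- objective increases
      have hI : ∀ A : Finset X, ∑ B : Finset X, bestSum B K φ2 * k A B
          = if x0 ∈ A then bestSum A K φ2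
            else r * bestSum (insert x0 A) K φ2 + s * bestSum A K φ2 := by
        intro A
        by_cases hA : x0 ∈ A
        · simp only [hkdef, if_pos hA]
          exact sum_delta_mul _ A
        · simp only [hkdef, if_neg hA]
          have h2 : ∀ B : Finset X, bestSum B K φ2 *
                (r * (if B = insert x0 A then (1:ℝ) else 0) + s * (if B = A then 1 else 0))
              = r * (bestSum B K φ2 * (if B = insert x0 A then (1:ℝ) else 0))
                + s * (bestSum B K φ2 * (if B = A then (1:ℝ) else 0)) := by
            intro B; ring
          rw [Finset.sum_congr rfl fun B _ => h2 B, Finset.sum_add_distrib,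
            ← Finset.mul_sum, ← Finset.mul_sum, sum_delta_mul, sum_delta_mul]
      calc ∑ B : Finset X, bestSum B K φ2 * μ B
          = ∑ A : Finset X, μ A * bestSum A K φ2 :=
            Finset.sum_congr rfl fun A _ => mul_comm _ _
        _ ≤ ∑ A : Finset X, μ A * ∑ B : Finset X, bestSum B K φ2 * k A B := by
            apply Finset.sum_le_sum
            intro A _
            apply mul_le_mul_of_nonneg_left _ (hd.1 A)
            rw [hI A]
            by_cases hA : x0 ∈ A
            · rw [if_pos hA]
            · rw [if_neg hA]
              have hmono : bestSum A K φ2 ≤ bestSum (insert x0 A) K φ2 :=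
                bestSum_mono K φ2 (Finset.subset_insert x0 A)
              have h5 : (r + s) * bestSum A K φ2 = bestSum A K φ2 := by
                rw [hrs, one_mul]
              have h6 : 0 ≤ r * (bestSum (insert x0 A) K φ2 - bestSum A K φ2) :=
                mul_nonneg hr0 (sub_nonneg.mpr hmono)
              nlinarith [h5, h6]
        _ = ∑ A : Finset X, ∑ B : Finset X, μ A * (bestSum B K φ2 * k A B) :=
            Finset.sum_congr rfl fun A _ => Finset.mul_sum _ _ _
        _ = ∑ B : Finset X, ∑ A : Finset X, μ A * (bestSum B K φ2 * k A B) := Finset.sum_comm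
        _ = ∑ B : Finset X, bestSum B K φ2 * ∑ A : Finset X, μ A * k A B := by
            refine Finset.sum_congr rfl fun B _ => ?_
            rw [Finset.mul_sum]
            exact Finset.sum_congr rfl fun A _ => by ring

lemma lift_all (K : ℕ) (φ1 φ2 : X → ℝ) :
    ∀ T : Finset X, ∀ y : X → ℝ, (∀ x, y x ≤ φ1 x) → (∀ x, φ1 x ≤ 1) →
    ∀ μ : Finset X → ℝ, IsDistOn μ y →
    ∃ lam : Finset X → ℝ, IsDistOn lam (fun x => if x ∈ T then φ1 x else y x) ∧
      ∑ B : Finset X, bestSum B K φ2 * μ B ≤ ∑ B : Finset X, bestSum B K φ2 * lam B := by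
  intro T
  induction T using Finset.induction_on with
  | empty =>
    intro y hy hφ μ hμ
    refine ⟨μ, ?_, le_refl _⟩
    have h : (fun x => if x ∈ (∅ : Finset X) then φ1 x else y x) = y := by
      funext x; simp
    rw [h]; exact hμ
  | @insert a T haT ih =>
    intro y hy hφ μ hμ
    obtain ⟨lam, hlam, hle⟩ := ih y hy hφ μ hμ
    set m : X → ℝ := fun x => if x ∈ T then φ1 x else y x with hmdef
    have hma : m a ≤ φ1 a := by
      simp only [hmdef, if_neg haT]; exact hy a
    obtain ⟨lam', hlam', hle'⟩ := lift_one K φ2 a m lam hlam (φ1 a) hma (hφ a)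
    have heq : Function.update m a (φ1 a) = fun x => if x ∈ insert a T then φ1 x else y x := by
      funext x
      by_cases hx : x = a
      · subst hx; rw [Function.update_self]; simp
      · rw [Function.update_of_ne hx]
        simp only [hmdef, Finset.mem_insert]
        by_cases hT : x ∈ T
        · simp [hT]
        · simp [hT, hx]
    refine ⟨lam', heq ▸ hlam', hle.trans hle'⟩

lemma value_le (K : ℕ) (φ2 : X → ℝ) (hφ2 : ∀ x, 0 ≤ φ2 x) (y : X → ℝ) (μ : Finset X → ℝ)
    (hμ : IsDistOn μ y) (hsupp : ∀ B, μ B ≠ 0 → B.card ≤ K) :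
    ∑ x, φ2 x * y x ≤ ∑ B : Finset X, bestSum B K φ2 * μ B := by
  have h1 : ∑ x, φ2 x * y x = ∑ B : Finset X, (∑ x ∈ B, φ2 x) * μ B := by
    have h2 : ∀ x, φ2 x * y x = ∑ B : Finset X, (if x ∈ B then φ2 x * μ B else 0) := by
      intro x
      rw [← hμ.2.2 x, Finset.mul_sum, Finset.sum_filter]
    rw [Finset.sum_congr rfl fun x _ => h2 x, Finset.sum_comm]
    refine Finset.sum_congr rfl fun B _ => ?_
    have h3 : ∀ x, (if x ∈ B then φ2 x * μ B else 0) = (if x ∈ B then φ2 x else 0) * μ B := by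
      intro x; split_ifs <;> simp
    rw [Finset.sum_congr rfl fun x _ => h3 x, ← Finset.sum_mul]
    congr 1
    simp [Finset.sum_ite_mem]
  rw [h1]
  apply Finset.sum_le_sum
  intro B _
  by_cases hB : μ B = 0
  · rw [hB, mul_zero, mul_zero]
  · exact mul_le_mul_of_nonneg_right (sum_le_bestSum B K φ2 (hsupp B hB)) (hμ.1 B)

end aux

/-- the per-user DH relaxation value `F` is at most the per-user
distribution-problem value `G`. -/
theorem F_le_G {X : Type*} [Fintype X] (φ1 φ2 : X → ℝ)
    (hφ1 : ∀ x, 0 ≤ φ1 x ∧ φ1 x ≤ 1) (hφ2 : ∀ x, 0 ≤ φ2 x ∧ φ2 x ≤ 1) (K : ℕ) :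
    sSup { v : ℝ | ∃ y : X → ℝ,
        (∀ x, 0 ≤ y x ∧ y x ≤ φ1 x) ∧ (∑ x, y x) ≤ (K : ℝ) ∧
        v = ∑ x, φ2 x * y x } ≤
    sSup { v : ℝ | ∃ lam : Finset X → ℝ,
        (∀ B, 0 ≤ lam B) ∧ (∑ B : Finset X, lam B) = 1 ∧
        (∀ x : X,
          (∑ B ∈ Finset.univ.filter (fun B : Finset X => x ∈ B), lam B) = φ1 x) ∧
        v = ∑ B : Finset X, bestSum B K φ2 * lam B } := by

  have hbdd : BddAbove { v : ℝ | ∃ lam : Finset X → ℝ,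
      (∀ B, 0 ≤ lam B) ∧ (∑ B : Finset X, lam B) = 1 ∧
      (∀ x : X,
        (∑ B ∈ Finset.univ.filter (fun B : Finset X => x ∈ B), lam B) = φ1 x) ∧
      v = ∑ B : Finset X, bestSum B K φ2 * lam B } := by
    refine ⟨(Fintype.card X : ℝ), ?_⟩
    rintro w ⟨lam, h0, h1, -, rfl⟩
    calc ∑ B : Finset X, bestSum B K φ2 * lam B
        ≤ ∑ B : Finset X, (Fintype.card X : ℝ) * lam B :=
          Finset.sum_le_sum fun B _ =>
            mul_le_mul_of_nonneg_right (bestSum_le_card B K φ2 fun x => (hφ2 x).2) (h0 B)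
      _ = (Fintype.card X : ℝ) := by rw [← Finset.mul_sum, h1, mul_one]
  apply csSup_le
  · refine ⟨0, ⟨fun _ => 0, fun x => ⟨le_refl 0, (hφ1 x).1⟩, by simp, by simp⟩⟩
  rintro v ⟨y, hy, hysum, rfl⟩
  have hyb : ∀ x, 0 ≤ y x ∧ y x ≤ 1 := fun x => ⟨(hy x).1, (hy x).2.trans (hφ1 x).2⟩
  have hcard : (Finset.univ.filter fun x => y x ≠ 0 ∧ y x ≠ 1).card ≤ Fintype.card X :=
    le_trans (Finset.card_filter_le _ _) (le_of_eq Finset.card_univ)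
  obtain ⟨μ, hμ, hsupp⟩ := exists_decomp K (Fintype.card X) y hyb hysum hcard
  obtain ⟨lam, hlam, hle⟩ :=
    lift_all K φ1 φ2 Finset.univ y (fun x => (hy x).2) (fun x => (hφ1 x).2) μ hμ
  have hlam' : IsDistOn lam φ1 := by
    have h : (fun x => if x ∈ (Finset.univ : Finset X) then φ1 x else y x) = φ1 := by
      funext x; simp
    rwa [h] at hlam
  have hval := value_le K φ2 (fun x => (hφ2 x).1) y μ hμ hsupp
  have hmem : (∑ B : Finset X, bestSum B K φ2 * lam B) ∈ { v : ℝ | ∃ lam : Finset X → ℝ,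
      (∀ B, 0 ≤ lam B) ∧ (∑ B : Finset X, lam B) = 1 ∧
      (∀ x : X,
        (∑ B ∈ Finset.univ.filter (fun B : Finset X => x ∈ B), lam B) = φ1 x) ∧
      v = ∑ B : Finset X, bestSum B K φ2 * lam B } :=
    ⟨lam, hlam'.1, hlam'.2.1, hlam'.2.2, rfl⟩
  calc ∑ x, φ2 x * y x ≤ ∑ B : Finset X, bestSum B K φ2 * μ B := hval
    _ ≤ ∑ B : Finset X, bestSum B K φ2 * lam B := hle
    _ ≤ _ := le_csSup hbdd hmem
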